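/- Let p be a prime, q a power of p, and 𝔽_q the finite field with q elements. Let ζ_p ∈ ℂ be a primitive p-th root of unity and let ψ be the canonical additive character of 𝔽_q given by ψ(x) = ζ_p^{Tr_{𝔽_q/𝔽_p}(x)}. Let χ be a nontrivial multiplicative character of 𝔽_q with values in ℂ. For m ≥ 1 let 𝔽_{q^m} be the degree-m extension of 𝔽_q, let χ' = χ ∘ N_{𝔽_{q^m}/𝔽_q} be the lift of χ by the field norm and ψ' = ψ ∘ Tr_{𝔽_{q^m}/𝔽_q} the lift of ψ by the field trace. Then the Gauss sums satisfy G(χ', ψ') = (−1)^{m−1} · G(χ, ψ)^m, where G(χ, ψ) = Σ_{x ∈ 𝔽_q^*} χ(x) ψ(x) and G(χ', ψ') = Σ_{x ∈ 𝔽_{q^m}^*} χ'(x) ψ'(x). -/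

import Mathlib

set_option linter.unusedSectionVars false
set_option linter.unusedVariables false

open Polynomial Finset

namespace DH

variable {F : Type*} [Field F] [Fintype F] [DecidableEq F]

/-- The character on monic polynomials. -/
noncomputable def Lam (χ : MulChar F ℂ) (ψ : AddChar F ℂ) (f : F[X]) : ℂ :=
  χ ((-1) ^ f.natDegree * f.coeff 0) * ψ (-f.nextCoeff)

variable (χ : MulChar F ℂ) (ψ : AddChar F ℂ)

lemma Lam_one : Lam χ ψ (1 : F[X]) = 1 := by
  simp [Lam, nextCoeff]

lemma Lam_mul {f g : F[X]} (hf : f.Monic) (hg : g.Monic) :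
    Lam χ ψ (f * g) = Lam χ ψ f * Lam χ ψ g := by
  unfold Lam
  rw [natDegree_mul hf.ne_zero hg.ne_zero, hf.nextCoeff_mul hg, mul_coeff_zero,
    neg_add, ψ.map_add_eq_mul]
  have : ((-1 : F)) ^ (f.natDegree + g.natDegree) * (f.coeff 0 * g.coeff 0)
      = ((-1) ^ f.natDegree * f.coeff 0) * ((-1) ^ g.natDegree * g.coeff 0) := by ring
  rw [this, map_mul]
  ring

lemma Lam_pow {f : F[X]} (hf : f.Monic) (t : ℕ) :
    Lam χ ψ (f ^ t) = Lam χ ψ f ^ t := by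
  induction t with
  | zero => simpa using Lam_one χ ψ
  | succ n ih => rw [pow_succ, Lam_mul χ ψ (hf.pow n) hf, ih, pow_succ]

/-- Parametrization of monic polynomials of degree `d`. -/
noncomputable def phi (d : ℕ) (a : Fin d → F) : F[X] := X ^ d + ∑ i, C (a i) * X ^ (i : ℕ)

lemma phi_monic (d : ℕ) (a : Fin d → F) : (phi d a).Monic :=
  monic_X_pow_add (degree_sum_fin_lt a)

lemma phi_natDegree (d : ℕ) (a : Fin d → F) : (phi d a).natDegree = d := by
  have : (phi d a).degree = d := by
    unfold phi
    rw [degree_add_eq_left_of_degree_lt (by rw [degree_X_pow]; exact degree_sum_fin_lt a),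
      degree_X_pow]
  exact natDegree_eq_of_degree_eq_some this

lemma phi_coeff {d : ℕ} (a : Fin d → F) (i : Fin d) : (phi d a).coeff i = a i := by
  unfold phi
  rw [coeff_add, coeff_X_pow, if_neg (Nat.ne_of_lt i.2), finset_sum_coeff, zero_add]
  rw [Finset.sum_eq_single i]
  · simp [coeff_C_mul_X_pow]
  · intro j _ hj
    rw [coeff_C_mul_X_pow, if_neg]
    exact fun h => hj (Fin.ext h.symm)
  · simp

lemma phi_injective (d : ℕ) : Function.Injective (phi (F := F) d) := by
  intro a b h
  funext i
  rw [← phi_coeff a i, ← phi_coeff b i, h]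

/-- Monic polynomials of degree `d` as a finset. -/
noncomputable def mo (F : Type*) [Field F] [Fintype F] [DecidableEq F] (d : ℕ) :
    Finset F[X] :=
  (univ : Finset (Fin d → F)).image (phi d)

lemma mem_mo {d : ℕ} {f : F[X]} : f ∈ mo F d ↔ f.Monic ∧ f.natDegree = d := by
  constructor
  · rintro hf
    obtain ⟨a, -, rfl⟩ := Finset.mem_image.mp hf
    exact ⟨phi_monic d a, phi_natDegree d a⟩
  · rintro ⟨hf, rfl⟩
    refine Finset.mem_image.mpr ⟨fun i => f.coeff i, Finset.mem_univ _, ?_⟩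
    unfold phi
    rw [Fin.sum_univ_eq_sum_range (fun i => C (f.coeff i) * X ^ i)]
    exact (hf.as_sum).symm

lemma sum_mo (d : ℕ) (G : F[X] → ℂ) :
    ∑ f ∈ mo F d, G f = ∑ a : Fin d → F, G (phi d a) :=
  Finset.sum_image fun a _ b _ h => phi_injective d h

open scoped Classical in
/-- Monic irreducible polynomials of degree `d`. -/
noncomputable def ir (F : Type*) [Field F] [Fintype F] [DecidableEq F] (d : ℕ) :
    Finset F[X] :=
  (mo F d).filter fun f => Irreducible f

lemma mem_ir {d : ℕ} {f : F[X]} :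
    f ∈ ir F d ↔ (f.Monic ∧ f.natDegree = d) ∧ Irreducible f := by
  classical
  rw [ir, Finset.mem_filter, mem_mo]

noncomputable def cc (χ : MulChar F ℂ) (ψ : AddChar F ℂ) (d : ℕ) : ℂ :=
  ∑ f ∈ mo F d, Lam χ ψ f

lemma cc_zero : cc χ ψ 0 = 1 := by
  rw [cc, sum_mo]
  have h1 : ∀ a : Fin 0 → F, phi 0 a = 1 := by
    intro a; simp [phi]
  rw [Fintype.sum_congr _ _ (fun a => by rw [h1 a])]
  simp [Lam_one]

lemma cc_one : cc χ ψ 1 = gaussSum χ ψ := by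
  rw [cc, sum_mo]
  have h1 : ∀ a : Fin 1 → F, Lam χ ψ (phi 1 a) = χ (-(a 0)) * ψ (-(a 0)) := by
    intro a
    have hd := phi_natDegree 1 a
    have hc : (phi 1 a).coeff 0 = a 0 := phi_coeff a 0
    have hn : (phi 1 a).nextCoeff = a 0 := by
      rw [nextCoeff_of_natDegree_pos (by rw [hd]; norm_num), hd]
      simpa using hc
    rw [Lam, hd, hc, hn, pow_one, neg_one_mul]
  rw [Fintype.sum_congr _ _ h1]
  rw [show ∑ a : Fin 1 → F, χ (-(a 0)) * ψ (-(a 0))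
      = ∑ x : F, χ (-x) * ψ (-x) from
    Fintype.sum_equiv (Equiv.funUnique (Fin 1) F) _ _ (fun a => rfl)]
  rw [gaussSum]
  exact Fintype.sum_equiv (Equiv.neg F) _ _ (fun x => by simp)

lemma cc_of_two_le (hχ : χ ≠ 1) {d : ℕ} (hd : 2 ≤ d) : cc χ ψ d = 0 := by
  rw [cc, sum_mo]
  have hlt : d - 1 < d := by omega
  set i0 : Fin d := ⟨0, by omega⟩ with hi0
  set i1 : Fin d := ⟨d - 1, hlt⟩ with hi1
  have hne : i1 ≠ i0 := by
    rw [hi0, hi1]; intro h; rw [Fin.mk.injEq] at h; omega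
  have h1 : ∀ a : Fin d → F,
      Lam χ ψ (phi d a) = χ ((-1) ^ d * a i0) * ψ (-(a i1)) := by
    intro a
    have hd' := phi_natDegree d a
    have hn : (phi d a).nextCoeff = a i1 := by
      rw [nextCoeff_of_natDegree_pos (by omega), hd']
      exact phi_coeff a i1
    rw [Lam, hd', hn, phi_coeff a i0]
  rw [Fintype.sum_congr _ _ h1]
  rw [← Equiv.sum_comp (Equiv.funSplitAt i0 F).symm
    (fun a => χ ((-1) ^ d * a i0) * ψ (-(a i1)))]
  have h2 : ∀ p : F × ({ j : Fin d // j ≠ i0 } → F),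
      ((Equiv.funSplitAt i0 F).symm p) i0 = p.1 ∧
      ((Equiv.funSplitAt i0 F).symm p) i1 = p.2 ⟨i1, hne⟩ := by
    intro p
    constructor
    · simp [Equiv.funSplitAt, Equiv.piSplitAt]
    · simp [Equiv.funSplitAt, Equiv.piSplitAt, dif_neg hne]
  rw [Fintype.sum_congr _ _ (fun p => by rw [(h2 p).1, (h2 p).2])]
  rw [Fintype.sum_prod_type]
  have h4 : ∀ x : F, ∑ y : { j : Fin d // j ≠ i0 } → F,
        χ ((-1) ^ d * (x, y).1) * ψ (-((x, y).2 ⟨i1, hne⟩))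
      = χ ((-1) ^ d * x) * ∑ y : { j : Fin d // j ≠ i0 } → F, ψ (-(y ⟨i1, hne⟩)) := by
    intro x; rw [Finset.mul_sum]
  rw [Fintype.sum_congr _ _ h4, ← Finset.sum_mul]
  have h3 : ∑ x : F, χ ((-1) ^ d * x) = 0 := by
    rw [Fintype.sum_congr _ _ (fun x => map_mul χ _ x), ← Finset.mul_sum,
      MulChar.sum_eq_zero_of_ne_one hχ, mul_zero]
  rw [h3, zero_mul]

/-- Power sums over irreducibles. -/
noncomputable def pp (χ : MulChar F ℂ) (ψ : AddChar F ℂ) (k : ℕ) : ℂ :=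
  ∑ d ∈ k.divisors, ∑ f ∈ ir F d, (d : ℂ) * Lam χ ψ f ^ (k / d)


lemma biUnion_antidiag (k : ℕ) :
    (Icc 1 k).biUnion (fun j => j.divisorsAntidiagonal)
      = ((Icc 1 k) ×ˢ (Icc 1 k)).filter (fun p => p.1 * p.2 ≤ k) := by
  ext ⟨d, t⟩
  simp only [Finset.mem_biUnion, Finset.mem_filter, Finset.mem_Icc, Finset.mem_product,
    Nat.mem_divisorsAntidiagonal]
  constructor
  · rintro ⟨j, ⟨hj1, hj2⟩, h, hj0⟩
    have hpos : 0 < d * t := by omega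
    have hd0 : 0 < d := Nat.pos_of_ne_zero (by rintro rfl; simp at hpos)
    have ht0 : 0 < t := Nat.pos_of_ne_zero (by rintro rfl; simp at hpos)
    have hdk : d ≤ k := le_trans (Nat.le_mul_of_pos_right d ht0) (by omega)
    have htk : t ≤ k := le_trans (Nat.le_mul_of_pos_left t hd0) (by omega)
    exact ⟨⟨⟨hd0, hdk⟩, ht0, htk⟩, by omega⟩
  · rintro ⟨⟨⟨hd1, _⟩, ht1, _⟩, hdt⟩
    have hpos : 0 < d * t := Nat.mul_pos hd1 ht1
    exact ⟨d * t, ⟨hpos, hdt⟩, rfl, by omega⟩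

open scoped Classical in
lemma step4 {d t k : ℕ} {f : F[X]} (hf : f ∈ ir F d) (ht : 1 ≤ t) :
    (if d * t ≤ k then ∑ h ∈ mo F (k - d * t), (d : ℂ) * Lam χ ψ f ^ t * Lam χ ψ h else 0)
      = ∑ g ∈ mo F k, if f ^ t ∣ g then (d : ℂ) * Lam χ ψ g else 0 := by
  obtain ⟨⟨hmon, hdeg⟩, hirr⟩ := mem_ir.mp hf
  have hftm : (f ^ t).Monic := hmon.pow t
  have hftd : (f ^ t).natDegree = d * t := by rw [natDegree_pow, hdeg, mul_comm]
  rw [← Finset.sum_filter]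
  split_ifs with hle
  · refine Finset.sum_bij (fun h _ => f ^ t * h) ?_ ?_ ?_ ?_
    · intro h hh
      obtain ⟨hhm, hhd⟩ := mem_mo.mp hh
      refine Finset.mem_filter.mpr ⟨mem_mo.mpr ⟨hftm.mul hhm, ?_⟩, Dvd.intro _ rfl⟩
      rw [natDegree_mul hftm.ne_zero hhm.ne_zero, hftd, hhd]
      omega
    · intro a _ b _ hab
      exact mul_left_cancel₀ (pow_ne_zero t hmon.ne_zero) hab
    · intro g hg
      obtain ⟨hgmo, hdvd⟩ := Finset.mem_filter.mp hg
      obtain ⟨hgm, hgd⟩ := mem_mo.mp hgmo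
      obtain ⟨h, rfl⟩ := hdvd
      have hhm : h.Monic := hftm.of_mul_monic_left hgm
      refine ⟨h, mem_mo.mpr ⟨hhm, ?_⟩, rfl⟩
      rw [natDegree_mul hftm.ne_zero hhm.ne_zero, hftd] at hgd
      omega
    · intro h hh
      obtain ⟨hhm, _⟩ := mem_mo.mp hh
      rw [Lam_mul χ ψ hftm hhm, Lam_pow χ ψ hmon, mul_assoc]
  · symm
    refine Finset.sum_eq_zero fun g hg => ?_
    exfalso
    obtain ⟨hgmo, hdvd⟩ := Finset.mem_filter.mp hg
    obtain ⟨hgm, hgd⟩ := mem_mo.mp hgmo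
    have := natDegree_le_of_dvd hdvd hgm.ne_zero
    rw [hftd, hgd] at this
    exact hle this

open scoped Classical in
lemma count_factor {k : ℕ} (hk : 1 ≤ k) {g : F[X]} (hg : g.Monic) (hdeg : g.natDegree = k) :
    ∑ d ∈ Icc 1 k, ∑ f ∈ ir F d,
      ((Icc 1 k).filter fun t => f ^ t ∣ g).card * d = k := by
  set s := UniqueFactorizationMonoid.normalizedFactors g with hs
  have hg0 : g ≠ 0 := hg.ne_zero
  -- the count of t's is the multiplicity
  have hcount : ∀ d ∈ Icc 1 k, ∀ f ∈ ir F d,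
      ((Icc 1 k).filter fun t => f ^ t ∣ g).card = s.count f := by
    intro d hd f hf
    obtain ⟨⟨hm, hdf⟩, hirr⟩ := mem_ir.mp hf
    have hd1 : 1 ≤ d := (Finset.mem_Icc.mp hd).1
    have hnorm : normalize f = f := hm.normalize_eq_self
    have hdvd_iff : ∀ t : ℕ, f ^ t ∣ g ↔ t ≤ s.count f := by
      intro t
      rw [pow_dvd_iff_le_emultiplicity,
        UniqueFactorizationMonoid.emultiplicity_eq_count_normalizedFactors hirr hg0, hnorm,
        ← hs, Nat.cast_le]
    have hcle : s.count f ≤ k := by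
      have h1 : f ^ (s.count f) ∣ g := (hdvd_iff _).mpr le_rfl
      have h2 := natDegree_le_of_dvd h1 hg0
      rw [natDegree_pow, hdf, hdeg] at h2
      calc s.count f = s.count f * 1 := (mul_one _).symm
        _ ≤ s.count f * d := Nat.mul_le_mul_left _ hd1
        _ ≤ k := h2
    have : (Icc 1 k).filter (fun t => f ^ t ∣ g) = Icc 1 (s.count f) := by
      ext t
      simp only [Finset.mem_filter, Finset.mem_Icc, hdvd_iff]
      omega
    rw [this, Nat.card_Icc]
    omega
  have hstep : ∑ d ∈ Icc 1 k, ∑ f ∈ ir F d, ((Icc 1 k).filter fun t => f ^ t ∣ g).card * d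
      = ∑ d ∈ Icc 1 k, ∑ f ∈ ir F d, s.count f * f.natDegree := by
    refine Finset.sum_congr rfl fun d hd => Finset.sum_congr rfl fun f hf => ?_
    rw [hcount d hd f hf, (mem_ir.mp hf).1.2]
  rw [hstep]
  -- convert to a sum over the biUnion
  rw [← Finset.sum_biUnion (by
    intro a _ b _ hab
    refine Finset.disjoint_left.mpr fun f hfa hfb => ?_
    exact hab ((mem_ir.mp hfa).1.2.symm.trans (mem_ir.mp hfb).1.2))]
  -- compare with the sum over `s.toFinset`
  have hmonic_s : ∀ f ∈ s, f.Monic := by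
    intro f hfs
    have h0 : f ≠ 0 := fun h =>
      (UniqueFactorizationMonoid.irreducible_of_normalized_factor f hfs).ne_zero (by rw [h])
    have := UniqueFactorizationMonoid.normalize_normalized_factor f hfs
    rw [← this]
    exact monic_normalize h0
  have hsub : s.toFinset ⊆ (Icc 1 k).biUnion (fun d => ir F d) := by
    intro f hfs
    rw [Multiset.mem_toFinset] at hfs
    have hirr := UniqueFactorizationMonoid.irreducible_of_normalized_factor f hfs
    have hm := hmonic_s f hfs
    have hdvd := UniqueFactorizationMonoid.dvd_of_mem_normalizedFactors hfs
    have hle := natDegree_le_of_dvd hdvd hg0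
    have hpos : 1 ≤ f.natDegree := by
      rcases Nat.eq_zero_or_pos f.natDegree with h0 | h0
      · exact absurd (hm.natDegree_eq_zero.mp h0 ▸ hirr.not_isUnit) (by simp)
      · exact h0
    refine Finset.mem_biUnion.mpr ⟨f.natDegree, Finset.mem_Icc.mpr ⟨hpos, hdeg ▸ hle⟩, ?_⟩
    exact mem_ir.mpr ⟨⟨hm, rfl⟩, hirr⟩
  have hzero : ∀ f ∈ (Icc 1 k).biUnion (fun d => ir F d), f ∉ s.toFinset →
      s.count f * f.natDegree = 0 := by
    intro f _ hfs
    rw [Multiset.count_eq_zero.mpr (fun h => hfs (Multiset.mem_toFinset.mpr h)), zero_mul]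
  rw [← Finset.sum_subset hsub hzero]
  have := Finset.sum_multiset_map_count s (fun f : F[X] => f.natDegree)
  simp only [smul_eq_mul] at this
  rw [← this]
  have hsm : s.prod.Monic := by
    have := monic_multiset_prod_of_monic s id (fun i hi => hmonic_s i hi)
    simpa using this
  have hprod : s.prod = g :=
    eq_of_monic_of_associated hsm hg (UniqueFactorizationMonoid.prod_normalizedFactors hg0)
  rw [← natDegree_multiset_prod_of_monic s hmonic_s, hprod, hdeg]


open scoped Classical in
lemma newton (hχ : χ ≠ 1) {k : ℕ} (hk : 1 ≤ k) :
    ∑ j ∈ Icc 1 k, pp χ ψ j * cc χ ψ (k - j) = (k : ℂ) * cc χ ψ k := by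
  have hdisj : (↑(Icc 1 k) : Set ℕ).PairwiseDisjoint
      (fun j => Nat.divisorsAntidiagonal j) := by
    intro a _ b _ hab
    refine Finset.disjoint_left.mpr fun p hpa hpb => hab ?_
    rw [← (Nat.mem_divisorsAntidiagonal.mp hpa).1, (Nat.mem_divisorsAntidiagonal.mp hpb).1]
  have h1 : ∀ j ∈ Icc 1 k, pp χ ψ j * cc χ ψ (k - j)
      = ∑ p ∈ j.divisorsAntidiagonal, ∑ f ∈ ir F p.1, ∑ h ∈ mo F (k - p.1 * p.2),
          (p.1 : ℂ) * Lam χ ψ f ^ p.2 * Lam χ ψ h := by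
    intro j hj
    rw [pp, ← Nat.sum_divisorsAntidiagonal (fun d t => ∑ f ∈ ir F d, (d : ℂ) * Lam χ ψ f ^ t)]
    rw [Finset.sum_mul]
    refine Finset.sum_congr rfl fun p hp => ?_
    have hpj : p.1 * p.2 = j := (Nat.mem_divisorsAntidiagonal.mp hp).1
    rw [hpj, cc, Finset.sum_mul]
    refine Finset.sum_congr rfl fun f _ => ?_
    rw [Finset.mul_sum]
  rw [Finset.sum_congr rfl h1, ← Finset.sum_biUnion hdisj, biUnion_antidiag,
    Finset.sum_filter, Finset.sum_product]
  have h2 : ∀ d ∈ Icc 1 k, ∀ t ∈ Icc 1 k,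
      (if d * t ≤ k then ∑ f ∈ ir F d, ∑ h ∈ mo F (k - d * t),
          (d : ℂ) * Lam χ ψ f ^ t * Lam χ ψ h else 0)
      = ∑ f ∈ ir F d, ∑ g ∈ mo F k, if f ^ t ∣ g then (d : ℂ) * Lam χ ψ g else 0 := by
    intro d hd t ht
    have hite : (if d * t ≤ k then ∑ f ∈ ir F d, ∑ h ∈ mo F (k - d * t),
          (d : ℂ) * Lam χ ψ f ^ t * Lam χ ψ h else 0)
        = ∑ f ∈ ir F d, (if d * t ≤ k then ∑ h ∈ mo F (k - d * t),
          (d : ℂ) * Lam χ ψ f ^ t * Lam χ ψ h else 0) := by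
      split_ifs with h
      · rfl
      · rw [Finset.sum_const_zero]
    rw [hite]
    exact Finset.sum_congr rfl fun f hf => step4 χ ψ hf (Finset.mem_Icc.mp ht).1
  rw [Finset.sum_congr rfl fun d hd => Finset.sum_congr rfl fun t ht => h2 d hd t ht]
  -- reorder the four sums
  rw [Finset.sum_congr rfl fun d (_ : d ∈ Icc 1 k) =>
    Finset.sum_congr rfl fun t (_ : t ∈ Icc 1 k) =>
      (Finset.sum_comm (s := ir F d) (t := mo F k))]
  rw [Finset.sum_congr rfl fun d (_ : d ∈ Icc 1 k) =>
    (Finset.sum_comm (s := Icc 1 k) (t := mo F k))]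
  rw [Finset.sum_comm (s := Icc 1 k) (t := mo F k)]
  rw [Finset.sum_congr rfl fun g (_ : g ∈ mo F k) =>
    Finset.sum_congr rfl fun d (_ : d ∈ Icc 1 k) =>
      (Finset.sum_comm (s := Icc 1 k) (t := ir F d))]
  -- now compute each `g` term
  rw [cc, Finset.mul_sum]
  refine Finset.sum_congr rfl fun g hg => ?_
  obtain ⟨hgm, hgd⟩ := mem_mo.mp hg
  have hcf := count_factor hk hgm hgd
  calc ∑ d ∈ Icc 1 k, ∑ f ∈ ir F d, ∑ t ∈ Icc 1 k,
        (if f ^ t ∣ g then (d : ℂ) * Lam χ ψ g else 0)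
      = ∑ d ∈ Icc 1 k, ∑ f ∈ ir F d,
          ((((Icc 1 k).filter fun t => f ^ t ∣ g).card : ℂ) * d) * Lam χ ψ g := by
        refine Finset.sum_congr rfl fun d _ => Finset.sum_congr rfl fun f _ => ?_
        rw [← Finset.sum_filter, Finset.sum_const, nsmul_eq_mul]
        ring
    _ = (∑ d ∈ Icc 1 k, ∑ f ∈ ir F d,
          ((((Icc 1 k).filter fun t => f ^ t ∣ g).card : ℂ) * d)) * Lam χ ψ g := by
        rw [Finset.sum_mul]
        exact Finset.sum_congr rfl fun d _ => (Finset.sum_mul _ _ _).symm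
    _ = (k : ℂ) * Lam χ ψ g := by
        have hc := congrArg (Nat.cast : ℕ → ℂ) hcf
        push_cast at hc
        rw [hc]

lemma pp_eq (hχ : χ ≠ 1) : ∀ k : ℕ, 1 ≤ k →
    pp χ ψ k = (-1) ^ (k - 1) * gaussSum χ ψ ^ k := by
  intro k
  induction k with
  | zero => omega
  | succ n ih =>
    intro _
    rcases Nat.eq_zero_or_pos n with rfl | hn
    · have h := newton χ ψ hχ (le_refl 1)
      rw [Finset.Icc_self, Finset.sum_singleton, Nat.sub_self, cc_zero, cc_one, mul_one] at h
      rw [h]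
      simp
    · have h := newton χ ψ hχ (show 1 ≤ n + 1 by omega)
      have hsplit : Icc 1 (n + 1) = insert (n + 1) (insert n (Icc 1 (n - 1))) := by
        ext j
        simp only [Finset.mem_insert, Finset.mem_Icc]
        omega
      have hni : (n : ℕ) ∉ Icc 1 (n - 1) := by
        simp only [Finset.mem_Icc]
        omega
      have hn1i : (n + 1 : ℕ) ∉ insert n (Icc 1 (n - 1)) := by
        simp only [Finset.mem_insert, Finset.mem_Icc]
        omega
      rw [hsplit, Finset.sum_insert hn1i, Finset.sum_insert hni] at h
      have hrest : ∑ j ∈ Icc 1 (n - 1), pp χ ψ j * cc χ ψ (n + 1 - j) = 0 := by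
        refine Finset.sum_eq_zero fun j hj => ?_
        have hj' := Finset.mem_Icc.mp hj
        rw [cc_of_two_le χ ψ hχ (by omega), mul_zero]
      rw [hrest, add_zero, Nat.sub_self, cc_zero, mul_one,
        show n + 1 - n = 1 from by omega, cc_one,
        cc_of_two_le χ ψ hχ (by omega), mul_zero] at h
      have hpn := ih hn
      have hstep : pp χ ψ (n + 1) = -(pp χ ψ n * gaussSum χ ψ) := by
        linear_combination h
      rw [hstep, hpn]
      obtain ⟨j, rfl⟩ : ∃ j, n = j + 1 := ⟨n - 1, by omega⟩
      simp only [Nat.add_sub_cancel]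
      ring


section FieldSide

open IntermediateField

variable {E : Type*} [Field E] [Fintype E] [Algebra F E]

lemma value_eq (x : E) :
    χ ((Algebra.norm F) x) * ψ ((Algebra.trace F E) x)
      = Lam χ ψ (minpoly F x) ^ (Module.finrank F E / (minpoly F x).natDegree) := by
  have hx : IsIntegral F x := IsIntegral.of_finite F x
  set d := (minpoly F x).natDegree with hd
  have hKd : Module.finrank F F⟮x⟯ = d := IntermediateField.adjoin.finrank hx
  have htower : Module.finrank F F⟮x⟯ * Module.finrank F⟮x⟯ E = Module.finrank F E :=
    Module.finrank_mul_finrank F F⟮x⟯ E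
  have hdpos : 0 < d := minpoly.natDegree_pos hx
  have hr : Module.finrank F⟮x⟯ E = Module.finrank F E / d := by
    rw [← htower, hKd, Nat.mul_div_cancel_left _ hdpos]
  set pb := IntermediateField.adjoin.powerBasis hx with hpb
  have hgen : pb.gen = IntermediateField.AdjoinSimple.gen F x :=
    IntermediateField.adjoin.powerBasis_gen hx
  have hmin : minpoly F pb.gen = minpoly F x := by
    rw [hgen, IntermediateField.minpoly_gen]
  have hdim : pb.dim = d := by rw [← PowerBasis.natDegree_minpoly pb, hmin]
  have hnorm : (Algebra.norm F) x
      = ((-1) ^ d * (minpoly F x).coeff 0) ^ (Module.finrank F E / d) := by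
    rw [Algebra.norm_eq_norm_adjoin F x, hr]
    congr 1
    rw [← hgen, Algebra.PowerBasis.norm_gen_eq_coeff_zero_minpoly pb, hdim, hmin]
  have htrace : (Algebra.trace F E) x
      = (Module.finrank F E / d) • (-(minpoly F x).nextCoeff) := by
    rw [trace_eq_trace_adjoin F x, hr]
    congr 1
    rw [← hgen, PowerBasis.trace_gen_eq_nextCoeff_minpoly pb, hmin]
  rw [hnorm, htrace, map_pow, AddChar.map_nsmul_eq_pow, Lam, ← hd, mul_pow]

open scoped Classical in
lemma card_roots_eq {f : F[X]} {d : ℕ} (hmon : f.Monic) (hirr : Irreducible f)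
    (hdf : f.natDegree = d) (hdvd : d ∣ Module.finrank F E) :
    ((univ : Finset E).filter fun x : E => (aeval x) f = 0).card = d := by
  have hf0 : f ≠ 0 := hmon.ne_zero
  have hdpos : 0 < d := by
    rcases Nat.eq_zero_or_pos d with h0 | h0
    · rw [h0] at hdf
      exact absurd (hmon.natDegree_eq_zero.mp hdf ▸ hirr.not_isUnit) (by simp)
    · exact h0
  have hmpos : 0 < Module.finrank F E := Module.finrank_pos
  have hcardE : Fintype.card E = Fintype.card F ^ Module.finrank F E := Module.card_eq_pow_finrank
  haveI : Fact (Irreducible f) := ⟨hirr⟩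
  haveI : Module.Finite F (AdjoinRoot f) := (AdjoinRoot.powerBasis hf0).finite
  haveI : Finite (AdjoinRoot f) := Module.finite_of_finite F
  letI : Fintype (AdjoinRoot f) := Fintype.ofFinite _
  have hcardK : Fintype.card (AdjoinRoot f) = Fintype.card F ^ d := by
    rw [Module.card_eq_pow_finrank (K := F) (V := AdjoinRoot f),
      PowerBasis.finrank (AdjoinRoot.powerBasis hf0), AdjoinRoot.powerBasis_dim, hdf]
  set α := AdjoinRoot.root f with hα_def
  have hα : α ^ Fintype.card F ^ d = α := by
    rw [← hcardK]; exact FiniteField.pow_card α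
  have hαm : α ^ Fintype.card F ^ Module.finrank F E = α := by
    obtain ⟨r, hrr⟩ := hdvd
    rw [hrr, pow_mul]
    clear hrr
    induction r with
    | zero => simp
    | succ n ihr => rw [pow_succ, pow_mul, ihr, hα]
  have hminα : minpoly F α = f := by
    rw [AdjoinRoot.minpoly_root hf0, hmon.leadingCoeff, inv_one, map_one, mul_one]
  have hfdvd : f ∣ (X : F[X]) ^ Fintype.card F ^ Module.finrank F E - X := by
    rw [← hminα]
    apply minpoly.dvd
    rw [map_sub, map_pow, aeval_X, hαm, sub_self]
  have hbig0 : ((X : E[X]) ^ Fintype.card E - X) ≠ 0 :=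
    FiniteField.X_pow_card_sub_X_ne_zero E Fintype.one_lt_card
  have hmapdvd : f.map (algebraMap F E) ∣ (X : E[X]) ^ Fintype.card E - X := by
    have h := Polynomial.map_dvd (algebraMap F E) hfdvd
    rwa [Polynomial.map_sub, Polynomial.map_pow, map_X, ← hcardE] at h
  have hroots_le := Polynomial.roots.le_of_dvd hbig0 hmapdvd
  rw [FiniteField.roots_X_pow_card_sub_X E] at hroots_le
  have hnodup : (f.map (algebraMap F E)).roots.Nodup := by
    refine Multiset.nodup_of_le hroots_le ?_
    exact Finset.univ.nodup
  have hbigF0 : ((X : F[X]) ^ Fintype.card F ^ Module.finrank F E - X) ≠ 0 :=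
    FiniteField.X_pow_card_pow_sub_X_ne_zero F (by omega) Fintype.one_lt_card
  have hbig_splits : Splits
      (((X : F[X]) ^ Fintype.card F ^ Module.finrank F E - X).map (algebraMap F E)) := by
    rw [splits_iff_card_roots, Polynomial.map_sub,
      Polynomial.map_pow, map_X, ← hcardE, FiniteField.roots_X_pow_card_sub_X E,
      FiniteField.X_pow_card_sub_X_natDegree_eq E Fintype.one_lt_card]
    simp
  have hsplits : Splits (f.map (algebraMap F E)) :=
    hbig_splits.of_dvd (Polynomial.map_ne_zero hbigF0) (Polynomial.map_dvd _ hfdvd)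
  have hcard := (Polynomial.natDegree_map (algebraMap F E) (p := f)).symm.trans
    hsplits.natDegree_eq_card_roots
  have hmap0 : f.map (algebraMap F E) ≠ 0 :=
    (Polynomial.map_ne_zero_iff (algebraMap F E).injective).mpr hf0
  have hset : (univ : Finset E).filter (fun x : E => (aeval x) f = 0)
      = (f.map (algebraMap F E)).roots.toFinset := by
    ext z
    simp only [Finset.mem_filter, Finset.mem_univ, true_and, Multiset.mem_toFinset,
      mem_roots hmap0, IsRoot.def, eval_map]
    rw [aeval_def]
  rw [hset, Multiset.toFinset_card_of_nodup hnodup, ← hcard, hdf]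


open scoped Classical in
lemma gauss_lift (hχ : χ ≠ 1) {m : ℕ} (hm : 1 ≤ m) (hE : Module.finrank F E = m)
    (χ' : MulChar E ℂ) (ψ' : AddChar E ℂ)
    (hχ' : ∀ x : E, χ' x = χ ((Algebra.norm F) x))
    (hψ' : ∀ x : E, ψ' x = ψ ((Algebra.trace F E) x)) :
    gaussSum χ' ψ' = (-1) ^ (m - 1) * gaussSum χ ψ ^ m := by
  have hstep1 : gaussSum χ' ψ'
      = ∑ x : E, Lam χ ψ (minpoly F x) ^ (m / (minpoly F x).natDegree) := by
    rw [gaussSum]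
    refine Finset.sum_congr rfl fun x _ => ?_
    rw [hχ' x, hψ' x, value_eq χ ψ x, hE]
  rw [hstep1,
    Finset.sum_comp (fun f : F[X] => Lam χ ψ f ^ (m / f.natDegree)) (fun x : E => minpoly F x)]
  have himg : (univ : Finset E).image (fun x => minpoly F x)
      = m.divisors.biUnion (fun d => ir F d) := by
    ext f
    simp only [Finset.mem_image, Finset.mem_biUnion, Nat.mem_divisors]
    constructor
    · rintro ⟨x, -, rfl⟩
      have hx : IsIntegral F x := IsIntegral.of_finite F x
      have hKd : Module.finrank F F⟮x⟯ = (minpoly F x).natDegree :=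
        IntermediateField.adjoin.finrank hx
      have htower : Module.finrank F F⟮x⟯ * Module.finrank F⟮x⟯ E = m := by
        rw [Module.finrank_mul_finrank F F⟮x⟯ E, hE]
      refine ⟨(minpoly F x).natDegree,
        ⟨⟨Module.finrank F⟮x⟯ E, by rw [← htower, hKd]⟩, by omega⟩, ?_⟩
      exact mem_ir.mpr ⟨⟨minpoly.monic hx, rfl⟩, minpoly.irreducible hx⟩
    · rintro ⟨d, ⟨hdvd, -⟩, hf⟩
      obtain ⟨⟨hmon, hdf⟩, hirr⟩ := mem_ir.mp hf
      have hcard := card_roots_eq hmon hirr hdf (hE ▸ hdvd)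
      have hdpos : 0 < d := by
        rcases Nat.eq_zero_or_pos d with h0 | h0
        · rw [h0] at hdf
          exact absurd (hmon.natDegree_eq_zero.mp hdf ▸ hirr.not_isUnit) (by simp)
        · exact h0
      have hne : ((univ : Finset E).filter fun x => (aeval x) f = 0).Nonempty := by
        rw [← Finset.card_pos, hcard]; exact hdpos
      obtain ⟨x, hx⟩ := hne
      have hroot := (Finset.mem_filter.mp hx).2
      exact ⟨x, Finset.mem_univ x, (minpoly.eq_of_irreducible_of_monic hirr hroot hmon).symm⟩
  have hdisj2 : (↑m.divisors : Set ℕ).PairwiseDisjoint (fun d => ir F d) := by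
    intro a _ b _ hab
    refine Finset.disjoint_left.mpr fun f hfa hfb => ?_
    exact hab ((mem_ir.mp hfa).1.2.symm.trans (mem_ir.mp hfb).1.2)
  rw [himg, Finset.sum_biUnion hdisj2]
  have hfiber : ∀ d ∈ m.divisors, ∀ f ∈ ir F d,
      ((univ : Finset E).filter fun x => minpoly F x = f).card = d := by
    intro d hd f hf
    obtain ⟨⟨hmon, hdf⟩, hirr⟩ := mem_ir.mp hf
    have hdvd := (Nat.mem_divisors.mp hd).1
    have hset : (univ : Finset E).filter (fun x => minpoly F x = f)
        = (univ : Finset E).filter (fun x => (aeval x) f = 0) := by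
      ext x
      simp only [Finset.mem_filter, Finset.mem_univ, true_and]
      constructor
      · rintro rfl
        exact minpoly.aeval F x
      · intro hroot
        exact (minpoly.eq_of_irreducible_of_monic hirr hroot hmon).symm
    rw [hset]
    exact card_roots_eq hmon hirr hdf (hE ▸ hdvd)
  have hpp : ∑ d ∈ m.divisors, ∑ f ∈ ir F d,
      ((univ : Finset E).filter fun x => minpoly F x = f).card
        • Lam χ ψ f ^ (m / f.natDegree)
      = pp χ ψ m := by
    rw [pp]
    refine Finset.sum_congr rfl fun d hd => Finset.sum_congr rfl fun f hf => ?_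
    rw [hfiber d hd f hf, (mem_ir.mp hf).1.2, nsmul_eq_mul]
  rw [hpp, pp_eq χ ψ hχ m hm]

end FieldSide

end DH

theorem stmt18 (p s q : ℕ) (hp : p.Prime) (hs : 1 ≤ s) (hq : q = p ^ s)
    (F E : Type*) [Field F] [Fintype F] [Field E] [Fintype E]
    [Algebra F E] [Algebra (ZMod p) F]
    (hF : Fintype.card F = q)
    (m : ℕ) (hm : 1 ≤ m) (hE : Module.finrank F E = m)
    (ζ : ℂ) (hζ : IsPrimitiveRoot ζ p)
    (ψ : AddChar F ℂ) (hψ : ∀ x : F, ψ x = ζ ^ (Algebra.trace (ZMod p) F x).val)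
    (ψ' : AddChar E ℂ) (hψ' : ∀ x : E, ψ' x = ψ (Algebra.trace F E x))
    (χ : MulChar F ℂ) (hχ : ∃ a : F, a ≠ 0 ∧ χ a ≠ 1)
    (χ' : MulChar E ℂ) (hχ' : ∀ x : E, χ' x = χ (Algebra.norm F x)) :
    gaussSum χ' ψ' = (-1) ^ (m - 1) * gaussSum χ ψ ^ m := by
  letI := Classical.decEq F
  have hχ1 : χ ≠ 1 := by
    rintro rfl
    obtain ⟨a, ha0, ha1⟩ := hχ
    exact ha1 (MulChar.one_apply (isUnit_iff_ne_zero.mpr ha0))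
  exact DH.gauss_lift χ ψ hχ1 hm hE χ' ψ' hχ' hψ'
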